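/- Two finite argumentation frameworks F and G are expansion equivalent with respect to strong admissible sets (for all AFs H, sad(F ∪ H) = sad(G ∪ H)) if and only if their grounded kernels are equal: F^k(gr) = G^k(gr). -/

import Mathlib

structure AF where
  args : Finset ℕ
  att : Finset (ℕ × ℕ)
  att_sub : att ⊆ args ×ˢ args

namespace AF

/-- S is conflict-free in F. -/
def cf (F : AF) (S : Set ℕ) : Prop :=
  S ⊆ ↑F.args ∧ ∀ a ∈ S, ∀ b ∈ S, (a, b) ∉ F.att

/-- the range S⁺ of S in F -/
def rng (F : AF) (S : Set ℕ) : Set ℕ :=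
  S ∪ {a | ∃ s ∈ S, (s, a) ∈ F.att}

/-- the anti-range S⁻ of S in F -/
def arng (F : AF) (S : Set ℕ) : Set ℕ :=
  S ∪ {a | ∃ s ∈ S, (a, s) ∈ F.att}

/-- a is defended by S in F -/
def defends (F : AF) (S : Set ℕ) (a : ℕ) : Prop :=
  ∀ b, (b, a) ∈ F.att → ∃ s ∈ S, (s, b) ∈ F.att

def setDefends (F : AF) (S T : Set ℕ) : Prop := ∀ a ∈ T, F.defends S a

def admissible (F : AF) (S : Set ℕ) : Prop := F.cf S ∧ ∀ a ∈ S, F.defends S a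

def complete (F : AF) (S : Set ℕ) : Prop :=
  F.admissible S ∧ ∀ a ∈ (F.args : Set ℕ), F.defends S a → a ∈ S

def grounded (F : AF) (S : Set ℕ) : Prop :=
  F.complete S ∧ ∀ T, F.complete T → S ⊆ T

def naive (F : AF) (S : Set ℕ) : Prop :=
  F.cf S ∧ ∀ T, F.cf T → S ⊆ T → S = T

def stable (F : AF) (S : Set ℕ) : Prop := F.cf S ∧ F.rng S = ↑F.args

def stage (F : AF) (S : Set ℕ) : Prop :=
  F.cf S ∧ ∀ T, F.cf T → F.rng S ⊆ F.rng T → F.rng S = F.rng T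

/-- strongly admissible sets (recursive definition) -/
inductive sad (F : AF) : Set ℕ → Prop where
  | intro (S : Set ℕ) (hsub : S ⊆ ↑F.args) (w : ℕ → Set ℕ)
      (hw1 : ∀ a ∈ S, w a ⊆ S \ {a})
      (hw2 : ∀ a ∈ S, sad F (w a))
      (hw3 : ∀ a ∈ S, F.defends (w a) a) : sad F S

/-- self-attacking arguments -/
def loops (F : AF) : Set ℕ := {a | (a, a) ∈ F.att}

/-- naive kernel -/
def naiveKernel (F : AF) : AF :=
  ⟨F.args,
   F.att ∪ (F.args ×ˢ F.args).filter
     (fun p => p.1 ≠ p.2 ∧ ((p.1, p.1) ∈ F.att ∨ (p.2, p.1) ∈ F.att ∨ (p.2, p.2) ∈ F.att)),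
   Finset.union_subset F.att_sub (Finset.filter_subset _ _)⟩

/-- stable kernel -/
def stbKernel (F : AF) : AF :=
  ⟨F.args, F.att.filter (fun p => ¬ (p.1 ≠ p.2 ∧ (p.1, p.1) ∈ F.att)),
   (Finset.filter_subset _ _).trans F.att_sub⟩

/-- grounded kernel -/
def grKernel (F : AF) : AF :=
  ⟨F.args,
   F.att.filter (fun p => ¬ (p.1 ≠ p.2 ∧ (p.2, p.2) ∈ F.att ∧ ((p.1, p.1) ∈ F.att ∨ (p.2, p.1) ∈ F.att))),
   (Finset.filter_subset _ _).trans F.att_sub⟩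

/-- F^l : remove attacks between distinct self-attacking arguments -/
def loopKernel (F : AF) : AF :=
  ⟨F.args,
   F.att.filter (fun p => ¬ (p.1 ≠ p.2 ∧ (p.1, p.1) ∈ F.att ∧ (p.2, p.2) ∈ F.att)),
   (Finset.filter_subset _ _).trans F.att_sub⟩

/-- union of AFs -/
def union (F G : AF) : AF :=
  ⟨F.args ∪ G.args, F.att ∪ G.att,
   Finset.union_subset
     (F.att_sub.trans (Finset.product_subset_product Finset.subset_union_left Finset.subset_union_left))
     (G.att_sub.trans (Finset.product_subset_product Finset.subset_union_right Finset.subset_union_right))⟩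

end AF


namespace AF

lemma att_fst_mem {F : AF} {p : ℕ × ℕ} (h : p ∈ F.att) : p.1 ∈ F.args :=
  (Finset.mem_product.1 (F.att_sub h)).1

lemma att_snd_mem {F : AF} {p : ℕ × ℕ} (h : p ∈ F.att) : p.2 ∈ F.args :=
  (Finset.mem_product.1 (F.att_sub h)).2

@[simp] lemma grKernel_args (F : AF) : F.grKernel.args = F.args := rfl

lemma mem_grKernel_att {F : AF} {a b : ℕ} :
    (a, b) ∈ F.grKernel.att ↔
      (a, b) ∈ F.att ∧ ¬ (a ≠ b ∧ (b, b) ∈ F.att ∧ ((a, a) ∈ F.att ∨ (b, a) ∈ F.att)) := by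
  simp [grKernel, Finset.mem_filter]

lemma grKernel_att_subset (F : AF) : F.grKernel.att ⊆ F.att :=
  Finset.filter_subset _ _

@[simp] lemma union_args (F H : AF) : (F.union H).args = F.args ∪ H.args := rfl

@[simp] lemma union_att (F H : AF) : (F.union H).att = F.att ∪ H.att := rfl

lemma loop_mem_grKernel {F : AF} {a : ℕ} : (a, a) ∈ F.grKernel.att ↔ (a, a) ∈ F.att := by
  simp [mem_grKernel_att]

lemma defends_mono {F : AF} {S T : Set ℕ} {a : ℕ} (hST : S ⊆ T) (h : F.defends S a) :
    F.defends T a := by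
  intro b hb
  obtain ⟨s, hs, hsb⟩ := h b hb
  exact ⟨s, hST hs, hsb⟩

/-- iteration of the characteristic function -/
def iter (F : AF) : ℕ → Set ℕ
  | 0 => ∅
  | n + 1 => {a | a ∈ (F.args : Set ℕ) ∧ F.defends (F.iter n) a}

lemma iter_succ_mono (F : AF) (n : ℕ) : F.iter n ⊆ F.iter (n + 1) := by
  induction n with
  | zero => simp [iter]
  | succ n ih =>
    intro a ha
    obtain ⟨ha1, ha2⟩ := ha
    exact ⟨ha1, defends_mono ih ha2⟩

lemma iter_mono (F : AF) {m n : ℕ} (h : m ≤ n) : F.iter m ⊆ F.iter n := by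
  induction n with
  | zero => simp_all
  | succ n ih =>
    rcases Nat.lt_or_ge m (n+1) with h' | h'
    · exact (ih (Nat.lt_succ_iff.1 h')).trans (F.iter_succ_mono n)
    · have : m = n + 1 := le_antisymm h h'
      subst this; exact subset_rfl

lemma iter_cf (F : AF) (n : ℕ) : ∀ a ∈ F.iter n, ∀ b ∈ F.iter n, (a, b) ∉ F.att := by
  induction n with
  | zero => simp [iter]
  | succ n ih =>
    intro a ha b hb hab
    obtain ⟨s, hs, hsa⟩ := hb.2 a hab
    obtain ⟨t, ht, hts⟩ := ha.2 s hsa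
    exact ih t ht s hs hts

lemma exists_uniform (F : AF) {S : Set ℕ} (hfin : S.Finite)
    (h : ∀ a ∈ S, ∃ n, a ∈ F.iter n) : ∃ N, S ⊆ F.iter N := by
  classical
  choose f hf using h
  refine ⟨hfin.toFinset.sup (fun a => if ha : a ∈ S then f a ha else 0), fun a ha => ?_⟩
  have hle := Finset.le_sup (f := fun a => if ha : a ∈ S then f a ha else 0)
    (hfin.mem_toFinset.2 ha)
  simp only [dif_pos ha] at hle
  exact F.iter_mono hle (hf a ha)

lemma sad_subset_args {F : AF} {S : Set ℕ} (h : F.sad S) : S ⊆ ↑F.args := by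
  cases h with | intro S hsub w hw1 hw2 hw3 => exact hsub

lemma sad_defends_witness {F : AF} {S : Set ℕ} (h : F.sad S) {a : ℕ} (ha : a ∈ S) :
    ∃ W, W ⊆ S \ {a} ∧ F.defends W a := by
  cases h with | intro S hsub w hw1 hw2 hw3 => exact ⟨w a, hw1 a ha, hw3 a ha⟩

lemma sad_subset_iter {F : AF} {S : Set ℕ} (h : F.sad S) : ∃ N, S ⊆ F.iter N := by
  induction h with
  | intro S hsub w hw1 hw2 hw3 ih =>
    have hpt : ∀ a ∈ S, ∃ n, a ∈ F.iter n := by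
      intro a ha
      have hwfin : (w a).Finite :=
        Set.Finite.subset F.args.finite_toSet (((hw1 a ha).trans Set.diff_subset).trans hsub)
      have : ∀ x ∈ w a, ∃ n, x ∈ F.iter n := by
        intro x hx
        obtain ⟨N, hN⟩ := ih a ha
        exact ⟨N, hN hx⟩
      obtain ⟨N, hN⟩ := F.exists_uniform hwfin this
      exact ⟨N + 1, ⟨hsub ha, defends_mono hN (hw3 a ha)⟩⟩
    have hfin : S.Finite := Set.Finite.subset F.args.finite_toSet hsub
    exact F.exists_uniform hfin hpt

lemma sad_cf {F : AF} {S : Set ℕ} (h : F.sad S) :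
    ∀ a ∈ S, ∀ b ∈ S, (a, b) ∉ F.att := by
  obtain ⟨N, hN⟩ := sad_subset_iter h
  intro a ha b hb
  exact F.iter_cf N a (hN ha) b (hN hb)

lemma sad_no_loop {F : AF} {S : Set ℕ} (h : F.sad S) {a : ℕ} (ha : a ∈ S) :
    (a, a) ∉ F.att := sad_cf h a ha a ha

end AF
namespace AF

lemma counter_in_kernel {F : AF} {W : Set ℕ} (h : F.sad W) :
    ∀ b, (∃ s ∈ W, (s, b) ∈ F.att) → ∃ s ∈ W, (s, b) ∈ F.grKernel.att := by
  induction h with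
  | intro S hsub w hw1 hw2 hw3 ih =>
    intro b hb
    obtain ⟨s, hs, hsb⟩ := hb
    by_cases hk : (s, b) ∈ F.grKernel.att
    · exact ⟨s, hs, hk⟩
    · have hS : F.sad S := sad.intro S hsub w hw1 hw2 hw3
      have hrem : s ≠ b ∧ (b, b) ∈ F.att ∧ ((s, s) ∈ F.att ∨ (b, s) ∈ F.att) := by
        by_contra hc
        exact hk (mem_grKernel_att.2 ⟨hsb, hc⟩)
      have hss : (s, s) ∉ F.att := sad_no_loop hS hs
      have hbs : (b, s) ∈ F.att := hrem.2.2.resolve_left hss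
      obtain ⟨t, ht, htb⟩ := hw3 s hs b hbs
      obtain ⟨t', ht', ht'k⟩ := ih s hs b ⟨t, ht, htb⟩
      exact ⟨t', ((hw1 s hs) ht').1, ht'k⟩

lemma sad_grKernel_of_sad {F : AF} {S : Set ℕ} (h : F.sad S) : F.grKernel.sad S := by
  induction h with
  | intro S hsub w hw1 hw2 hw3 ih =>
    refine sad.intro S hsub w hw1 ih ?_
    intro a ha b hba
    exact counter_in_kernel (hw2 a ha) b (hw3 a ha b (F.grKernel_att_subset hba))

lemma sad_of_sad_grKernel {F : AF} {S : Set ℕ} (h : F.grKernel.sad S) : F.sad S := by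
  induction h with
  | intro S hsub w hw1 hw2 hw3 ih =>
    have hS : F.grKernel.sad S := sad.intro S hsub w hw1 hw2 hw3
    refine sad.intro S hsub w hw1 ih ?_
    intro a ha b hba
    by_cases hk : (b, a) ∈ F.grKernel.att
    · obtain ⟨s, hs, hsb⟩ := hw3 a ha b hk
      exact ⟨s, hs, F.grKernel_att_subset hsb⟩
    · exfalso
      have hrem : b ≠ a ∧ (a, a) ∈ F.att ∧ ((b, b) ∈ F.att ∨ (a, b) ∈ F.att) := by
        by_contra hc
        exact hk (mem_grKernel_att.2 ⟨hba, hc⟩)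
      exact sad_no_loop hS ha (loop_mem_grKernel.2 hrem.2.1)

lemma sad_grKernel_iff {F : AF} {S : Set ℕ} : F.sad S ↔ F.grKernel.sad S :=
  ⟨sad_grKernel_of_sad, sad_of_sad_grKernel⟩

lemma loop_iff_of_grKernel_eq {F G : AF} (h : F.grKernel = G.grKernel) (a : ℕ) :
    (a, a) ∈ F.att ↔ (a, a) ∈ G.att := by
  rw [← loop_mem_grKernel, ← loop_mem_grKernel (F := G), h]

lemma grKernel_union_att_sub {F G H : AF} (h : F.grKernel = G.grKernel) :
    (F.union H).grKernel.att ⊆ (G.union H).grKernel.att := by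
  have hA : F.args = G.args := by rw [← grKernel_args F, ← grKernel_args G, h]
  have hloop := loop_iff_of_grKernel_eq h
  have hkatt : F.grKernel.att = G.grKernel.att := by rw [h]
  intro p hp
  obtain ⟨a, b⟩ := p
  rw [mem_grKernel_att] at hp ⊢
  simp only [union_att, Finset.mem_union] at hp ⊢
  obtain ⟨hab, hnc⟩ := hp
  by_cases hEq : a = b
  · subst hEq
    constructor
    · rcases hab with h' | h'
      · exact Or.inl ((hloop a).1 h')
      · exact Or.inr h'
    · intro hc; exact hc.1 rfl
  · push_neg at hnc
    have hnc := hnc hEq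
    by_cases hbb : (b, b) ∈ F.att ∨ (b, b) ∈ H.att
    · -- removal condition was blocked by  (a,a)∉U_F ∧ (b,a)∉U_F
      have haa := (hnc hbb).1
      have hba := (hnc hbb).2
      have haaG : (a, a) ∉ G.att := fun hc => haa.1 ((hloop a).2 hc)
      have hbaG : (b, a) ∉ G.att := by
        intro hc
        have : (b, a) ∈ G.grKernel.att := by
          rw [mem_grKernel_att]
          refine ⟨hc, ?_⟩
          rintro ⟨-, haaG', -⟩
          exact haaG haaG'
        rw [← hkatt] at this
        exact hba.1 (F.grKernel_att_subset this)
      refine ⟨?_, ?_⟩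
      · rcases hab with h' | h'
        · left
          have : (a, b) ∈ F.grKernel.att := by
            rw [mem_grKernel_att]
            refine ⟨h', ?_⟩
            rintro ⟨-, -, haa' | hba'⟩
            · exact haa.1 haa'
            · exact hba.1 hba'
          rw [hkatt] at this
          exact G.grKernel_att_subset this
        · exact Or.inr h'
      · rintro ⟨-, -, hbad⟩
        rcases hbad with h' | h'
        · rcases h' with h' | h'
          · exact haaG h'
          · exact haa.2 h'
        · rcases h' with h' | h'
          · exact hbaG h'
          · exact hba.2 h'
    · -- (b,b) not in U_F, so not in U_G either
      push_neg at hbb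
      have hbbG : (b, b) ∉ G.att := fun hc => hbb.1 ((hloop b).2 hc)
      refine ⟨?_, ?_⟩
      · rcases hab with h' | h'
        · left
          have : (a, b) ∈ F.grKernel.att := by
            rw [mem_grKernel_att]
            refine ⟨h', ?_⟩
            rintro ⟨-, hbb', -⟩
            exact hbb.1 hbb'
          rw [hkatt] at this
          exact G.grKernel_att_subset this
        · exact Or.inr h'
      · rintro ⟨-, hbb', -⟩
        rcases hbb' with h' | h'
        · exact hbbG h'
        · exact hbb.2 h'

end AF
namespace AF

lemma ext' {F G : AF} (h1 : F.args = G.args) (h2 : F.att = G.att) : F = G := by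
  cases F; cases G; cases h1; cases h2; rfl

lemma grKernel_union_eq {F G H : AF} (h : F.grKernel = G.grKernel) :
    (F.union H).grKernel = (G.union H).grKernel := by
  refine ext' ?_ (le_antisymm (grKernel_union_att_sub h) (grKernel_union_att_sub h.symm))
  have hA : F.args = G.args := by rw [← grKernel_args F, ← grKernel_args G, h]
  simp [grKernel, union, hA]

lemma sad_empty (F : AF) : F.sad ∅ :=
  sad.intro ∅ (Set.empty_subset _) (fun _ => ∅) (by simp) (fun a ha => absurd ha (by simp))
    (fun a ha => absurd ha (by simp))

lemma sad_insert {F : AF} {W : Set ℕ} {a : ℕ} (hW : F.sad W) (ha : a ∈ F.args)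
    (hna : a ∉ W) (hd : F.defends W a) : F.sad (insert a W) := by
  cases hW with
  | intro W hsub w hw1 hw2 hw3 =>
    classical
    refine sad.intro _ ?_ (fun x => if x = a then W else w x) ?_ ?_ ?_
    · exact Set.insert_subset ha hsub
    · intro x hx
      by_cases hxa : x = a
      · subst hxa
        simp only [if_pos rfl]
        intro y hy
        exact ⟨Set.mem_insert_of_mem _ hy, fun hya => hna (hya ▸ hy)⟩
      · rcases hx with hx | hx
        · exact absurd hx hxa
        · simp only [if_neg hxa]
          intro y hy
          have := hw1 x hx hy
          exact ⟨Set.mem_insert_of_mem _ this.1, this.2⟩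
    · intro x hx
      by_cases hxa : x = a
      · simp only [if_pos hxa]
        exact sad.intro W hsub w hw1 hw2 hw3
      · rcases hx with hx | hx
        · exact absurd hx hxa
        · simp only [if_neg hxa]; exact hw2 x hx
    · intro x hx
      by_cases hxa : x = a
      · subst hxa; simp only [if_pos rfl]; exact hd
      · rcases hx with hx | hx
        · exact absurd hx hxa
        · simp only [if_neg hxa]; exact hw3 x hx

lemma sad_singleton {F : AF} {z : ℕ} (hz : z ∈ F.args) (hun : ∀ b, (b, z) ∉ F.att) :
    F.sad {z} := by
  have := sad_insert (F := F) (a := z) F.sad_empty hz (by simp) ?_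
  · simpa using this
  · intro b hb; exact absurd hb (hun b)

lemma not_att_fst {F : AF} {x y : ℕ} (h : x ∉ F.args) : (x, y) ∉ F.att :=
  fun hc => h (att_fst_mem hc)

lemma not_att_snd {F : AF} {x y : ℕ} (h : y ∉ F.args) : (x, y) ∉ F.att :=
  fun hc => h (att_snd_mem hc)

end AF
namespace AF

lemma loop_transfer {F G : AF}
    (hyp : ∀ H : AF, {S | (F.union H).sad S} = {S | (G.union H).sad S})
    {a : ℕ} (ha : (a, a) ∈ F.att) : (a, a) ∈ G.att := by
  classical
  by_contra haaG
  have haF : a ∈ F.args := att_fst_mem ha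
  obtain ⟨z, hz⟩ := Infinite.exists_notMem_finset (F.args ∪ G.args)
  rw [Finset.mem_union] at hz
  push_neg at hz
  obtain ⟨hzF, hzG⟩ := hz
  set AH : Finset ℕ := insert z (F.args ∪ G.args) with hAH
  set H : AF := ⟨AH, (AH ×ˢ AH).filter (fun p => p.1 = z ∧ p.2 ≠ a ∧ p.2 ≠ z),
    Finset.filter_subset _ _⟩ with hH
  have hHatt : ∀ p : ℕ × ℕ, p ∈ H.att ↔ p.2 ∈ AH ∧ p.1 = z ∧ p.2 ≠ a ∧ p.2 ≠ z := by
    intro p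
    simp only [hH, Finset.mem_filter, Finset.mem_product]
    constructor
    · rintro ⟨⟨-, h2⟩, h3⟩; exact ⟨h2, h3⟩
    · rintro ⟨h2, h3⟩
      exact ⟨⟨by rw [h3.1]; exact Finset.mem_insert_self _ _, h2⟩, h3⟩
  -- S = {z, a} is sad in G ∪ H
  have hzu : ∀ b, (b, z) ∉ (G.union H).att := by
    intro b hb
    rw [union_att, Finset.mem_union] at hb
    rcases hb with hb | hb
    · exact hzG (att_snd_mem hb)
    · exact ((hHatt _).1 hb).2.2.2 rfl
  have hsz : (G.union H).sad {z} :=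
    sad_singleton (by simp [union, hAH, hH]) hzu
  have hS : (G.union H).sad (insert a {z}) := by
    refine sad_insert hsz ?_ ?_ ?_
    · simp only [union_args, Finset.mem_union]
      right
      simp [hAH, haF, hH]
    · simp only [Set.mem_singleton_iff]
      intro h; exact hzF (h ▸ haF)
    · intro b hb
      rw [union_att, Finset.mem_union] at hb
      rcases hb with hb | hb
      · have hbG : b ∈ G.args := att_fst_mem hb
        have hba : b ≠ a := fun h => haaG (h ▸ hb)
        refine ⟨z, rfl, ?_⟩
        rw [union_att, Finset.mem_union]
        right
        rw [hHatt]
        exact ⟨by simp [hAH, hbG], rfl, hba, fun h => hzG (h ▸ hbG)⟩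
      · exact absurd rfl ((hHatt _).1 hb).2.2.1
  -- transfer to F ∪ H and derive contradiction via the self-loop
  have hSF : (F.union H).sad (insert a {z}) := by
    have := Set.ext_iff.1 (hyp H) (insert a {z})
    exact this.2 hS
  exact sad_no_loop hSF (Set.mem_insert a _)
    (by rw [union_att, Finset.mem_union]; exact Or.inl ha)

end AF
namespace AF

lemma args_transfer {F G : AF}
    (hyp : ∀ H : AF, {S | (F.union H).sad S} = {S | (G.union H).sad S})
    {a : ℕ} (ha : a ∈ F.args) : a ∈ G.args := by
  classical
  by_cases hloop : (a, a) ∈ F.att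
  · exact att_fst_mem (loop_transfer hyp hloop)
  obtain ⟨z, hz⟩ := Infinite.exists_notMem_finset (F.args ∪ G.args)
  rw [Finset.mem_union] at hz
  push_neg at hz
  obtain ⟨hzF, hzG⟩ := hz
  have hza : z ≠ a := fun h => hzF (h ▸ ha)
  set AH : Finset ℕ := insert z ((F.args ∪ G.args).erase a) with hAH
  set H : AF := ⟨AH, (AH ×ˢ AH).filter (fun p => p.1 = z ∧ p.2 ≠ z),
    Finset.filter_subset _ _⟩ with hH
  have hHatt : ∀ p : ℕ × ℕ, p ∈ H.att ↔ p.2 ∈ AH ∧ p.1 = z ∧ p.2 ≠ z := by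
    intro p
    simp only [hH, Finset.mem_filter, Finset.mem_product]
    constructor
    · rintro ⟨⟨-, h2⟩, h3⟩; exact ⟨h2, h3⟩
    · rintro ⟨h2, h3⟩
      exact ⟨⟨by rw [h3.1]; exact Finset.mem_insert_self _ _, h2⟩, h3⟩
  have hanH : a ∉ AH := by
    simp only [hAH, Finset.mem_insert, Finset.mem_erase]
    push_neg
    exact ⟨fun h => hza h.symm, fun h => absurd rfl h⟩
  -- S = {z, a} is sad in F ∪ H
  have hzu : ∀ b, (b, z) ∉ (F.union H).att := by
    intro b hb
    rw [union_att, Finset.mem_union] at hb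
    rcases hb with hb | hb
    · exact hzF (att_snd_mem hb)
    · exact ((hHatt _).1 hb).2.2 rfl
  have hsz : (F.union H).sad {z} :=
    sad_singleton (by simp [union, hAH, hH]) hzu
  have hS : (F.union H).sad (insert a {z}) := by
    refine sad_insert hsz ?_ ?_ ?_
    · simp only [union_args, Finset.mem_union]; exact Or.inl ha
    · simp only [Set.mem_singleton_iff]
      exact fun h => hza h.symm
    · intro b hb
      rw [union_att, Finset.mem_union] at hb
      rcases hb with hb | hb
      · have hbF : b ∈ F.args := att_fst_mem hb
        have hba : b ≠ a := fun h => hloop (h ▸ hb)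
        refine ⟨z, rfl, ?_⟩
        rw [union_att, Finset.mem_union]
        right
        rw [hHatt]
        refine ⟨?_, rfl, fun h => hzF (h ▸ hbF)⟩
        simp [hAH, Finset.mem_erase, hba, hbF]
      · exact absurd ((hHatt _).1 hb).1 hanH
  -- transfer to G ∪ H : a must be an argument there
  have hSG : (G.union H).sad (insert a {z}) := by
    have := Set.ext_iff.1 (hyp H) (insert a {z})
    exact this.1 hS
  have := sad_subset_args hSG (Set.mem_insert a _)
  simp only [union_args, Finset.coe_union, Set.mem_union, Finset.mem_coe] at this
  rcases this with h | h
  · exact h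
  · exact absurd h hanH

end AF
namespace AF

lemma katt_transfer {F G : AF}
    (hyp : ∀ H : AF, {S | (F.union H).sad S} = {S | (G.union H).sad S})
    {a b : ℕ} (h : (a, b) ∈ F.grKernel.att) : (a, b) ∈ G.grKernel.att := by
  classical
  have hyp' : ∀ H : AF, {S | (G.union H).sad S} = {S | (F.union H).sad S} :=
    fun H => (hyp H).symm
  rw [mem_grKernel_att] at h ⊢
  obtain ⟨hab, hnc⟩ := h
  have haF : a ∈ F.args := att_fst_mem hab
  have hbF : b ∈ F.args := att_snd_mem hab
  by_cases heq : a = b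
  · subst heq
    exact ⟨loop_transfer hyp hab, by rintro ⟨hne, -, -⟩; exact hne rfl⟩
  push_neg at hnc
  have hnc := hnc heq
  by_cases hbb : (b, b) ∈ F.att
  · -- Case B : b is self-attacking
    obtain ⟨haa, hba⟩ := hnc hbb
    have haaG : (a, a) ∉ G.att := fun hc => haa (loop_transfer hyp' hc)
    obtain ⟨z, hz⟩ := Infinite.exists_notMem_finset (F.args ∪ G.args)
    obtain ⟨c, hc⟩ := Infinite.exists_notMem_finset (insert z (F.args ∪ G.args))
    rw [Finset.mem_union] at hz
    push_neg at hz
    obtain ⟨hzF, hzG⟩ := hz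
    rw [Finset.mem_insert, Finset.mem_union] at hc
    push_neg at hc
    obtain ⟨hcz, hcF, hcG⟩ := hc
    have hza : z ≠ a := fun h => hzF (h ▸ haF)
    have hzb : z ≠ b := fun h => hzF (h ▸ hbF)
    have hca : c ≠ a := fun h => hcF (h ▸ haF)
    have hcb : c ≠ b := fun h => hcF (h ▸ hbF)
    set AH : Finset ℕ := insert c (insert z (F.args ∪ G.args)) with hAH
    set H : AF := ⟨AH, (AH ×ˢ AH).filter
      (fun p => (p.1 = z ∧ p.2 ≠ a ∧ p.2 ≠ b ∧ p.2 ≠ z ∧ p.2 ≠ c) ∨ (p.1 = b ∧ p.2 = c)),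
      Finset.filter_subset _ _⟩ with hH
    have hbAH : b ∈ AH := by simp [hAH, hbF]
    have hcAH : c ∈ AH := by simp [hAH]
    have hzAH : z ∈ AH := by simp [hAH]
    have hHatt : ∀ p : ℕ × ℕ, p ∈ H.att ↔
        (p.2 ∈ AH ∧ p.1 = z ∧ p.2 ≠ a ∧ p.2 ≠ b ∧ p.2 ≠ z ∧ p.2 ≠ c) ∨ (p.1 = b ∧ p.2 = c) := by
      intro p
      simp only [hH, Finset.mem_filter, Finset.mem_product]
      constructor
      · rintro ⟨⟨-, h2⟩, h3 | h3⟩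
        · exact Or.inl ⟨h2, h3⟩
        · exact Or.inr h3
      · rintro (⟨h2, h3⟩ | h3)
        · exact ⟨⟨by rw [h3.1]; exact hzAH, h2⟩, Or.inl h3⟩
        · exact ⟨⟨by rw [h3.1]; exact hbAH, by rw [h3.2]; exact hcAH⟩, Or.inr h3⟩
    -- S = {z, a, c} is sad in F ∪ H
    have hzu : ∀ d, (d, z) ∉ (F.union H).att := by
      intro d hd
      rw [union_att, Finset.mem_union] at hd
      rcases hd with hd | hd
      · exact hzF (att_snd_mem hd)
      · rcases (hHatt _).1 hd with ⟨-, -, -, -, h', -⟩ | ⟨-, h'⟩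
        · exact h' rfl
        · exact hcz h'.symm
    have hsz : (F.union H).sad {z} :=
      sad_singleton (by simp only [union_args, Finset.mem_union]; exact Or.inr hzAH) hzu
    have hsza : (F.union H).sad (insert a {z}) := by
      refine sad_insert hsz ?_ ?_ ?_
      · simp only [union_args, Finset.mem_union]; exact Or.inl haF
      · simp only [Set.mem_singleton_iff]; exact fun h => hza h.symm
      · intro d hd
        rw [union_att, Finset.mem_union] at hd
        rcases hd with hd | hd
        · have hdF : d ∈ F.args := att_fst_mem hd
          have hda : d ≠ a := fun h => haa (h ▸ hd)
          have hdb : d ≠ b := fun h => hba (h ▸ hd)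
          refine ⟨z, rfl, ?_⟩
          rw [union_att, Finset.mem_union]
          right
          rw [hHatt]
          exact Or.inl ⟨by simp [hAH, hdF], rfl, hda, hdb,
            fun h => hzF (h ▸ hdF), fun h => hcF (h ▸ hdF)⟩
        · rcases (hHatt _).1 hd with ⟨-, -, h', -⟩ | ⟨-, h'⟩
          · exact absurd rfl h'
          · exact absurd h'.symm hca
    have hS : (F.union H).sad (insert c (insert a {z})) := by
      refine sad_insert hsza ?_ ?_ ?_
      · simp only [union_args, Finset.mem_union]; exact Or.inr hcAH
      · simp only [Set.mem_insert_iff, Set.mem_singleton_iff]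
        push_neg
        exact ⟨hca, hcz⟩
      · intro d hd
        rw [union_att, Finset.mem_union] at hd
        rcases hd with hd | hd
        · exact absurd (att_snd_mem hd) hcF
        · rcases (hHatt _).1 hd with ⟨-, -, -, -, -, h'⟩ | ⟨h', -⟩
          · exact absurd rfl h'
          · subst h'
            refine ⟨a, Set.mem_insert a _, ?_⟩
            rw [union_att, Finset.mem_union]
            exact Or.inl hab
    have hSG : (G.union H).sad (insert c (insert a {z})) := by
      have := Set.ext_iff.1 (hyp H) (insert c (insert a {z}))
      exact this.1 hS
    -- extract (a, b) ∈ G.att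
    have hzbn : (z, b) ∉ (G.union H).att := by
      intro h'
      rw [union_att, Finset.mem_union] at h'
      rcases h' with h' | h'
      · exact hzG (att_fst_mem h')
      · rcases (hHatt _).1 h' with ⟨-, -, -, h'', -⟩ | ⟨h'', -⟩
        · exact h'' rfl
        · exact hzb h''
    have habG : (a, b) ∈ G.att := by
      obtain ⟨W, hWsub, hWdef⟩ := sad_defends_witness hSG (Set.mem_insert c _)
      have hbc : (b, c) ∈ (G.union H).att := by
        rw [union_att, Finset.mem_union]
        exact Or.inr ((hHatt (b, c)).2 (Or.inr ⟨rfl, rfl⟩))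
      obtain ⟨s, hsW, hsb⟩ := hWdef b hbc
      have hsS := hWsub hsW
      rw [Set.mem_diff, Set.mem_insert_iff, Set.mem_insert_iff, Set.mem_singleton_iff,
        Set.mem_singleton_iff] at hsS
      rcases hsS.1 with h' | h' | h'
      · exact absurd h' hsS.2
      · subst h'
        rw [union_att, Finset.mem_union] at hsb
        rcases hsb with h'' | h''
        · exact h''
        · rcases (hHatt _).1 h'' with ⟨-, h3, -⟩ | ⟨h3, -⟩
          · exact absurd h3 (fun h => hzF (h ▸ haF))
          · exact absurd h3 heq
      · subst h'
        exact absurd hsb hzbn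
    have hbaG : (b, a) ∉ G.att := by
      intro hc'
      obtain ⟨W, hWsub, hWdef⟩ :=
        sad_defends_witness hSG (Set.mem_insert_of_mem c (Set.mem_insert a _))
      have hba' : (b, a) ∈ (G.union H).att := by
        rw [union_att, Finset.mem_union]; exact Or.inl hc'
      obtain ⟨s, hsW, hsb⟩ := hWdef b hba'
      have hsS := hWsub hsW
      rw [Set.mem_diff, Set.mem_insert_iff, Set.mem_insert_iff, Set.mem_singleton_iff,
        Set.mem_singleton_iff] at hsS
      rcases hsS.1 with h' | h' | h'
      · subst h'
        rw [union_att, Finset.mem_union] at hsb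
        rcases hsb with h'' | h''
        · exact hcG (att_fst_mem h'')
        · rcases (hHatt _).1 h'' with ⟨-, h3, -⟩ | ⟨-, h3⟩
          · exact hcz (h3 ▸ rfl)
          · exact hcb (by simpa using h3.symm ▸ rfl)
      · exact absurd h' hsS.2
      · subst h'
        exact absurd hsb hzbn
    refine ⟨habG, ?_⟩
    rintro ⟨-, -, h' | h'⟩
    · exact haaG h'
    · exact hbaG h'
  · -- Case A : b is not self-attacking
    have hbbG : (b, b) ∉ G.att := fun hc => hbb (loop_transfer hyp' hc)
    suffices habG : (a, b) ∈ G.att by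
      refine ⟨habG, ?_⟩
      rintro ⟨-, hbb', -⟩
      exact hbbG hbb'
    by_contra habG
    obtain ⟨z, hz⟩ := Infinite.exists_notMem_finset (F.args ∪ G.args)
    rw [Finset.mem_union] at hz
    push_neg at hz
    obtain ⟨hzF, hzG⟩ := hz
    have hzb : z ≠ b := fun h => hzF (h ▸ hbF)
    set AH : Finset ℕ := insert z (F.args ∪ G.args) with hAH
    set H : AF := ⟨AH, (AH ×ˢ AH).filter
      (fun p => p.1 = z ∧ p.2 ≠ a ∧ p.2 ≠ b ∧ p.2 ≠ z), Finset.filter_subset _ _⟩ with hH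
    have hHatt : ∀ p : ℕ × ℕ, p ∈ H.att ↔
        p.2 ∈ AH ∧ p.1 = z ∧ p.2 ≠ a ∧ p.2 ≠ b ∧ p.2 ≠ z := by
      intro p
      simp only [hH, Finset.mem_filter, Finset.mem_product]
      constructor
      · rintro ⟨⟨-, h2⟩, h3⟩; exact ⟨h2, h3⟩
      · rintro ⟨h2, h3⟩
        exact ⟨⟨by rw [h3.1]; exact Finset.mem_insert_self _ _, h2⟩, h3⟩
    -- S = {z, b} is sad in G ∪ H
    have hzu : ∀ d, (d, z) ∉ (G.union H).att := by
      intro d hd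
      rw [union_att, Finset.mem_union] at hd
      rcases hd with hd | hd
      · exact hzG (att_snd_mem hd)
      · exact ((hHatt _).1 hd).2.2.2.2 rfl
    have hsz : (G.union H).sad {z} :=
      sad_singleton (by simp [union, hAH, hH]) hzu
    have hS : (G.union H).sad (insert b {z}) := by
      refine sad_insert hsz ?_ ?_ ?_
      · simp only [union_args, Finset.mem_union]
        right; simp [hAH, hbF, hH]
      · simp only [Set.mem_singleton_iff]; exact fun h => hzb h.symm
      · intro d hd
        rw [union_att, Finset.mem_union] at hd
        rcases hd with hd | hd
        · have hdG : d ∈ G.args := att_fst_mem hd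
          have hdb : d ≠ b := fun h => hbbG (h ▸ hd)
          have hda : d ≠ a := fun h => habG (h ▸ hd)
          refine ⟨z, rfl, ?_⟩
          rw [union_att, Finset.mem_union]
          right
          rw [hHatt]
          exact ⟨by simp [hAH, hdG], rfl, hda, hdb, fun h => hzG (h ▸ hdG)⟩
        · exact absurd rfl ((hHatt _).1 hd).2.2.2.1
    have hSF : (F.union H).sad (insert b {z}) := by
      have := Set.ext_iff.1 (hyp H) (insert b {z})
      exact this.2 hS
    obtain ⟨W, hWsub, hWdef⟩ := sad_defends_witness hSF (Set.mem_insert b _)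
    have hab' : (a, b) ∈ (F.union H).att := by
      rw [union_att, Finset.mem_union]; exact Or.inl hab
    obtain ⟨s, hsW, hsa⟩ := hWdef a hab'
    have hsS := hWsub hsW
    rw [Set.mem_diff, Set.mem_insert_iff, Set.mem_singleton_iff, Set.mem_singleton_iff] at hsS
    rcases hsS.1 with h' | h'
    · exact absurd h' hsS.2
    · subst h'
      rw [union_att, Finset.mem_union] at hsa
      rcases hsa with h'' | h''
      · exact hzF (att_fst_mem h'')
      · exact ((hHatt _).1 h'').2.2.1 rfl

end AF
theorem stmt10 (F G : AF) :
    (∀ H : AF, {S | (F.union H).sad S} = {S | (G.union H).sad S}) ↔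
      F.grKernel = G.grKernel := by
  constructor
  · intro hyp
    have hyp' : ∀ H : AF, {S | (G.union H).sad S} = {S | (F.union H).sad S} :=
      fun H => (hyp H).symm
    refine AF.ext' ?_ ?_
    · ext x
      simp only [AF.grKernel_args]
      exact ⟨AF.args_transfer hyp, AF.args_transfer hyp'⟩
    · ext p
      obtain ⟨a, b⟩ := p
      exact ⟨AF.katt_transfer hyp, AF.katt_transfer hyp'⟩
  · intro hk H
    ext S
    simp only [Set.mem_setOf_eq]
    rw [AF.sad_grKernel_iff, AF.sad_grKernel_iff (F := G.union H),
      AF.grKernel_union_eq hk]
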